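/- arXiv:1510.00238 — 4 statements merged into one kernel-verified Lean document; each statement's English description precedes it below -/
import Mathlib

section
/- Let ρ be a pseudometric on 𝔐 which is continuous with respect to the sup metric and invariant under the Homeo⁺[0,1]-action (ρ(ξ∘g, ζ∘g) = ρ(ξ,ζ) for all g ∈ Homeo⁺[0,1]), let U_ρ ⊆ (0,1) be the union of all ρ-gaps, and let K_ρ = (0,1) ∖ U_ρ. Then K_ρ has no isolated points. -/
/-- The space `𝔐` of continuous weakly increasing surjections of `[0,1]`, with the
sup metric (inherited from `C([0,1],[0,1])`). -/
def M : Type :=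
  {f : C(unitInterval, unitInterval) // Monotone f ∧ Function.Surjective f}

noncomputable instance : MetricSpace M := Subtype.metricSpace

/-- Right composition of `ξ ∈ 𝔐` with an increasing self-homeomorphism `g` of `[0,1]`,
i.e. the action of `g⁻¹ ∈ Homeo⁺[0,1]` on `ξ`. -/
def Mcomp (ξ : M) (g : unitInterval ≃ₜ unitInterval) (hg : Monotone g) : M :=
  ⟨(ξ.1).comp ⟨⇑g, g.continuous⟩, by
    constructor
    · intro a b hab
      exact ξ.2.1 (hg hab)
    · intro y
      obtain ⟨x, hx⟩ := ξ.2.2 y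
      exact ⟨g.symm x, by simpa using hx⟩⟩

/-- `(α,β)` is a `ρ`-gap: a nonempty open subinterval of `(0,1)` for which there are
`ξ, ζ ∈ 𝔐` with `ρ(ξ,ζ) = 0` and, for every `s`, `ξ(s) ≤ α` or `ζ(s) ≥ β`. -/
def IsGap (ρ : M → M → ℝ) (α β : ℝ) : Prop :=
  0 ≤ α ∧ α < β ∧ β ≤ 1 ∧
    ∃ ξ ζ : M, ρ ξ ζ = 0 ∧ ∀ s : unitInterval, (ξ.1 s : ℝ) ≤ α ∨ β ≤ (ζ.1 s : ℝ)

/-- `U_ρ`, the union of all `ρ`-gaps. -/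
def Urho (ρ : M → M → ℝ) : Set ℝ :=
  {t | ∃ α β : ℝ, IsGap ρ α β ∧ t ∈ Set.Ioo α β}

open Set Filter Topology Function unitInterval

namespace Stmt15

abbrev I01 := unitInterval

-- basic facts about M
lemma Mzero (f : M) : f.1 0 = 0 := by
  obtain ⟨x, hx⟩ := f.2.2 0
  refine le_antisymm ?_ unitInterval.nonneg'
  calc f.1 0 ≤ f.1 x := f.2.1 unitInterval.nonneg'
    _ = 0 := hx

lemma Mone (f : M) : f.1 1 = 1 := by
  obtain ⟨x, hx⟩ := f.2.2 1
  refine le_antisymm unitInterval.le_one' ?_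
  calc (1 : I01) = f.1 x := hx.symm
    _ ≤ f.1 1 := f.2.1 unitInterval.le_one'

lemma surj_of_endpoints {φ : I01 → I01} (hc : Continuous φ) (h0 : φ 0 = 0) (h1 : φ 1 = 1) :
    Function.Surjective φ := by
  intro y
  set g : ℝ → ℝ := fun x => (φ (Set.projIcc 0 1 zero_le_one x) : ℝ) with hg
  have hgc : Continuous g := continuous_subtype_val.comp (hc.comp continuous_projIcc)
  have key := intermediate_value_Icc (zero_le_one (α := ℝ)) hgc.continuousOn
  have hy : (y : ℝ) ∈ Icc (g 0) (g 1) := by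
    simp only [hg, Set.projIcc_left, Set.projIcc_right]
    rw [show (⟨0, left_mem_Icc.2 zero_le_one⟩ : I01) = 0 from rfl,
      show (⟨1, right_mem_Icc.2 zero_le_one⟩ : I01) = 1 from rfl, h0, h1]
    exact ⟨y.2.1, y.2.2⟩
  obtain ⟨x, hx, hgx⟩ := key hy
  refine ⟨⟨x, hx⟩, ?_⟩
  have : Set.projIcc 0 1 zero_le_one x = ⟨x, hx⟩ := Set.projIcc_of_mem _ hx
  apply Subtype.ext
  rw [← hgx, hg]
  simp [this]

/-- Build an element of `M` from data. -/
def mkM (φ : I01 → I01) (hc : Continuous φ) (hm : Monotone φ) (h0 : φ 0 = 0) (h1 : φ 1 = 1) : M :=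
  ⟨⟨φ, hc⟩, hm, surj_of_endpoints hc h0 h1⟩

@[simp] lemma mkM_apply (φ : I01 → I01) (hc hm h0 h1) (s : I01) : (mkM φ hc hm h0 h1).1 s = φ s :=
  rfl

/-- Build a homeomorphism from a strictly monotone continuous self-map of `[0,1]`
fixing the endpoints. -/
noncomputable def homeoOfStrict (φ : I01 → I01) (hc : Continuous φ) (hm : StrictMono φ)
    (h0 : φ 0 = 0) (h1 : φ 1 = 1) : I01 ≃ₜ I01 :=
  Continuous.homeoOfEquivCompactToT2
    (f := Equiv.ofBijective φ ⟨hm.injective, surj_of_endpoints hc h0 h1⟩) hc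

@[simp] lemma homeoOfStrict_apply (φ : I01 → I01) (hc hm h0 h1) (s : I01) :
    homeoOfStrict φ hc hm h0 h1 s = φ s := rfl

lemma symm_monotone (g : I01 ≃ₜ I01) (hg : Monotone ⇑g) : Monotone ⇑g.symm := by
  intro x y hxy
  rcases le_total (g.symm x) (g.symm y) with h | h
  · exact h
  · have := hg h
    simp only [Homeomorph.apply_symm_apply] at this
    have hxy2 : x = y := le_antisymm hxy this
    rw [hxy2]

----------------- new part 2 --------------------

/-- Extension of an element of `M` to a monotone map `ℝ → ℝ`. -/
noncomputable def ext (f : M) : ℝ → ℝ := fun u => (f.1 (Set.projIcc 0 1 zero_le_one u) : ℝ)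

lemma ext_mono (f : M) : Monotone (ext f) := fun u v h => by
  exact Subtype.coe_le_coe.2 (f.2.1 (monotone_projIcc _ h))

lemma ext_cont (f : M) : Continuous (ext f) :=
  continuous_subtype_val.comp (f.1.continuous.comp continuous_projIcc)

lemma ext_mem (f : M) (u : ℝ) : ext f u ∈ Icc (0:ℝ) 1 := (f.1 _).2

lemma ext_apply (f : M) {u : ℝ} (hu : u ∈ Icc (0:ℝ) 1) : ext f u = (f.1 ⟨u, hu⟩ : ℝ) := by
  rw [ext, Set.projIcc_of_mem]

lemma ext_zero (f : M) : ext f 0 = 0 := by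
  rw [ext_apply f (left_mem_Icc.2 zero_le_one)]
  rw [show (⟨(0:ℝ), left_mem_Icc.2 zero_le_one⟩ : I01) = 0 from rfl, Mzero f]
  rfl

lemma ext_one (f : M) : ext f 1 = 1 := by
  rw [ext_apply f (right_mem_Icc.2 zero_le_one)]
  rw [show (⟨(1:ℝ), right_mem_Icc.2 zero_le_one⟩ : I01) = 1 from rfl, Mone f]
  rfl

lemma ext_of_nonpos (f : M) {u : ℝ} (hu : u ≤ 0) : ext f u = 0 := by
  rw [ext, Set.projIcc_of_le_left _ hu,
    show (⟨(0:ℝ), left_mem_Icc.2 zero_le_one⟩ : I01) = 0 from rfl, Mzero f]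
  rfl

/-- Composition inside `M`. -/
def compM (ξ Θ : M) : M := ⟨ξ.1.comp Θ.1, (ξ.2.1.comp Θ.2.1 : _), ξ.2.2.comp Θ.2.2⟩

@[simp] lemma compM_apply (ξ Θ : M) (s : I01) : (compM ξ Θ).1 s = ξ.1 (Θ.1 s) := rfl

section rho
variable (ρ : M → M → ℝ)
    (hrefl : ∀ ξ : M, ρ ξ ξ = 0)
    (hsymm : ∀ ξ ζ : M, ρ ξ ζ = ρ ζ ξ)
    (htri : ∀ ξ ζ χ : M, ρ ξ χ ≤ ρ ξ ζ + ρ ζ χ)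
    (hcont : Continuous fun p : M × M => ρ p.1 p.2)
    (hinv : ∀ (ξ ζ : M) (g : unitInterval ≃ₜ unitInterval) (hg : Monotone ⇑g),
      ρ (Mcomp ξ g hg) (Mcomp ζ g hg) = ρ ξ ζ)

include hrefl hsymm htri in
lemma rho_nonneg (x y : M) : 0 ≤ ρ x y := by
  have h := htri x y x
  rw [hrefl x, hsymm y x] at h
  linarith

include hcont hinv in
/-- Zero pairs are preserved under precomposition with elements of `M`. -/
lemma rho_comp_zero {ξ ζ : M} (hz : ρ ξ ζ = 0) (Θ : M) :
    ρ (compM ξ Θ) (compM ζ Θ) = 0 := by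
  -- approximating homeomorphisms
  have memI : ∀ (n : ℕ) (s : I01),
      (1 - 1/(n+1 : ℝ)) * (Θ.1 s : ℝ) + (1/(n+1 : ℝ)) * (s : ℝ) ∈ Icc (0:ℝ) 1 := by
    intro n s
    have hn0 : (0:ℝ) < 1/(n+1 : ℝ) := by positivity
    have hn1 : (1/(n+1 : ℝ)) ≤ 1 := by
      rw [div_le_one (by positivity)]; linarith [Nat.cast_nonneg (α := ℝ) n]
    constructor
    · have := (Θ.1 s).2.1
      have := s.2.1
      nlinarith
    · have h1 := (Θ.1 s).2.2
      have h2 := s.2.2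
      nlinarith
  set e : ℕ → I01 → I01 := fun n s =>
    ⟨(1 - 1/(n+1 : ℝ)) * (Θ.1 s : ℝ) + (1/(n+1 : ℝ)) * (s : ℝ), memI n s⟩ with he
  have hecont : ∀ n, Continuous (e n) := by
    intro n
    apply Continuous.subtype_mk
    exact ((continuous_const.mul (continuous_subtype_val.comp Θ.1.continuous)).add
      (continuous_const.mul continuous_subtype_val))
  have hemono : ∀ n, StrictMono (e n) := by
    intro n x y hxy
    have hn0 : (0:ℝ) < 1/(n+1 : ℝ) := by positivity
    have hn1 : (1/(n+1 : ℝ)) ≤ 1 := by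
      rw [div_le_one (by positivity)]; linarith [Nat.cast_nonneg (α := ℝ) n]
    have h1 : (Θ.1 x : ℝ) ≤ (Θ.1 y : ℝ) := Subtype.coe_le_coe.2 (Θ.2.1 hxy.le)
    have h2 : (x : ℝ) < (y : ℝ) := hxy
    rw [← Subtype.coe_lt_coe]
    simp only [he]
    nlinarith
  have he0 : ∀ n, e n 0 = 0 := by
    intro n; apply Subtype.ext
    simp only [he]
    rw [Mzero Θ]
    show (1 - 1/(n+1 : ℝ)) * ((0:I01) : ℝ) + (1/(n+1 : ℝ)) * ((0:I01) : ℝ) = ((0:I01):ℝ)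
    norm_num
  have he1 : ∀ n, e n 1 = 1 := by
    intro n; apply Subtype.ext
    simp only [he]
    rw [Mone Θ]
    show (1 - 1/(n+1 : ℝ)) * 1 + (1/(n+1 : ℝ)) * 1 = 1
    ring
  set g : ℕ → I01 ≃ₜ I01 := fun n =>
    homeoOfStrict (e n) (hecont n) (hemono n) (he0 n) (he1 n) with hgdef
  have hgmono : ∀ n, Monotone ⇑(g n) := by
    intro n x y hxy
    show g n x ≤ g n y
    rw [hgdef]
    simp only [homeoOfStrict_apply]
    exact (hemono n).monotone hxy
  have hzn : ∀ n, ρ (Mcomp ξ (g n) (hgmono n)) (Mcomp ζ (g n) (hgmono n)) = 0 := by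
    intro n; rw [hinv, hz]
  -- convergence
  have hconv : ∀ (χ : M), Tendsto (fun n => Mcomp χ (g n) (hgmono n)) atTop (𝓝 (compM χ Θ)) := by
    intro χ
    rw [Metric.tendsto_atTop]
    intro ε hε
    obtain ⟨δ, hδ, hδ2⟩ := Metric.uniformContinuous_iff.1
      (CompactSpace.uniformContinuous_of_continuous χ.1.continuous) (ε/2) (by linarith)
    obtain ⟨N, hN⟩ := exists_nat_gt (1/δ)
    refine ⟨N, fun n hn => ?_⟩
    have hkey : dist (Mcomp χ (g n) (hgmono n)) (compM χ Θ) ≤ ε/2 := by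
      change dist (Mcomp χ (g n) (hgmono n)).1 (compM χ Θ).1 ≤ ε/2
      rw [ContinuousMap.dist_le (by linarith)]
      intro s
      show dist (χ.1 (g n s)) (χ.1 (Θ.1 s)) ≤ ε/2
      refine le_of_lt (hδ2 ?_)
      rw [Subtype.dist_eq]
      have hgs : ((g n) s : ℝ) = (1 - 1/(n+1 : ℝ)) * (Θ.1 s : ℝ) + (1/(n+1 : ℝ)) * (s : ℝ) := rfl
      rw [hgs]
      rw [Real.dist_eq]
      have hb : |(1 - 1/(n+1 : ℝ)) * (Θ.1 s : ℝ) + (1/(n+1 : ℝ)) * (s : ℝ) - (Θ.1 s : ℝ)|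
          = (1/(n+1 : ℝ)) * |(s : ℝ) - (Θ.1 s : ℝ)| := by
        rw [show (1 - 1/(n+1 : ℝ)) * (Θ.1 s : ℝ) + (1/(n+1 : ℝ)) * (s : ℝ) - (Θ.1 s : ℝ)
          = (1/(n+1 : ℝ)) * ((s : ℝ) - (Θ.1 s : ℝ)) by ring, abs_mul,
          abs_of_pos (show (0:ℝ) < 1/(n+1:ℝ) by positivity)]
      rw [hb]
      have habs : |(s : ℝ) - (Θ.1 s : ℝ)| ≤ 1 := by
        rw [abs_le]
        constructor
        · have := s.2.1; have := (Θ.1 s).2.2; linarith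
        · have := s.2.2; have := (Θ.1 s).2.1; linarith
      have hδN : 1/(n+1 : ℝ) < δ := by
        rw [div_lt_iff₀ (by positivity)]
        rw [div_lt_iff₀ hδ] at hN
        have : (N : ℝ) ≤ n := Nat.cast_le.2 hn
        nlinarith
      calc (1/(n+1 : ℝ)) * |(s : ℝ) - (Θ.1 s : ℝ)| ≤ (1/(n+1 : ℝ)) * 1 := by
            apply mul_le_mul_of_nonneg_left habs (by positivity)
        _ = 1/(n+1 : ℝ) := by ring
        _ < δ := hδN
    linarith [hkey]
  have hpair : Tendsto (fun n => (Mcomp ξ (g n) (hgmono n), Mcomp ζ (g n) (hgmono n))) atTop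
      (𝓝 (compM ξ Θ, compM ζ Θ)) := (hconv ξ).prodMk_nhds (hconv ζ)
  have h1 : Tendsto (fun n => ρ (Mcomp ξ (g n) (hgmono n)) (Mcomp ζ (g n) (hgmono n))) atTop
      (𝓝 (ρ (compM ξ Θ) (compM ζ Θ))) := (hcont.tendsto _).comp hpair
  have h2 : (fun n => ρ (Mcomp ξ (g n) (hgmono n)) (Mcomp ζ (g n) (hgmono n))) = fun _ => 0 :=
    funext hzn
  rw [h2] at h1
  exact tendsto_nhds_unique h1 tendsto_const_nhds

end rho


----------------------------------------------------------------
-- Common parametrization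
----------------------------------------------------------------

section commonParam

variable (f g : M)

/-- The admissible set for the common parametrization at time `s`. -/
def Aset (s : I01) : Set ℝ :=
  {u | max 0 (2*(s:ℝ)-1) ≤ u ∧ u ≤ min 1 (2*(s:ℝ)) ∧ ext g (2*(s:ℝ) - u) ≤ ext f u}

/-- The common parametrization. -/
noncomputable def Tmap (s : I01) : ℝ := sInf (Aset f g s)

lemma max_le_min (s : I01) : max 0 (2*(s:ℝ)-1) ≤ min 1 (2*(s:ℝ)) := by
  have h1 := s.2.1; have h2 := s.2.2
  rcases max_cases 0 (2*(s:ℝ)-1) with ⟨he, _⟩ | ⟨he, _⟩ <;>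
    rcases min_cases 1 (2*(s:ℝ)) with ⟨he2, _⟩ | ⟨he2, _⟩ <;> rw [he, he2] <;> linarith

lemma Aset_nonempty (s : I01) : (min 1 (2*(s:ℝ))) ∈ Aset f g s := by
  refine ⟨max_le_min s, le_refl _, ?_⟩
  rcases min_cases 1 (2*(s:ℝ)) with ⟨he2, hc⟩ | ⟨he2, hc⟩ <;> rw [he2]
  · calc ext g (2*(s:ℝ) - 1) ≤ 1 := (ext_mem g _).2
      _ = ext f 1 := (ext_one f).symm
  · calc ext g (2*(s:ℝ) - 2*(s:ℝ)) = ext g 0 := by norm_num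
      _ = 0 := ext_zero g
      _ ≤ ext f (2*(s:ℝ)) := (ext_mem f _).1

lemma Aset_closed (s : I01) : IsClosed (Aset f g s) := by
  have : Aset f g s = Ici (max 0 (2*(s:ℝ)-1)) ∩ (Iic (min 1 (2*(s:ℝ)))
      ∩ {u | ext g (2*(s:ℝ) - u) ≤ ext f u}) := by
    ext u; simp [Aset, and_assoc]
  rw [this]
  refine isClosed_Ici.inter (isClosed_Iic.inter ?_)
  exact isClosed_le ((ext_cont g).comp (continuous_const.sub continuous_id)) (ext_cont f)

lemma Aset_bddBelow (s : I01) : BddBelow (Aset f g s) :=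
  ⟨max 0 (2*(s:ℝ)-1), fun u hu => hu.1⟩

lemma Tmap_mem (s : I01) : Tmap f g s ∈ Aset f g s :=
  IsClosed.csInf_mem (Aset_closed f g s) ⟨_, Aset_nonempty f g s⟩ (Aset_bddBelow f g s)

lemma Tmap_min {s : I01} {u : ℝ} (hu : u ∈ Aset f g s) : Tmap f g s ≤ u :=
  csInf_le (Aset_bddBelow f g s) hu

lemma Tmap_lb (s : I01) : max 0 (2*(s:ℝ)-1) ≤ Tmap f g s := (Tmap_mem f g s).1
lemma Tmap_ub (s : I01) : Tmap f g s ≤ min 1 (2*(s:ℝ)) := (Tmap_mem f g s).2.1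
lemma Tmap_nonneg (s : I01) : 0 ≤ Tmap f g s := le_trans (le_max_left _ _) (Tmap_lb f g s)
lemma Tmap_le_one (s : I01) : Tmap f g s ≤ 1 := le_trans (Tmap_ub f g s) (min_le_left _ _)
lemma Tmap_le_2s (s : I01) : Tmap f g s ≤ 2*(s:ℝ) := le_trans (Tmap_ub f g s) (min_le_right _ _)
lemma Tmap_ge (s : I01) : 2*(s:ℝ)-1 ≤ Tmap f g s := le_trans (le_max_right _ _) (Tmap_lb f g s)

/-- The key equality along the common parametrization. -/
lemma Tmap_eq (s : I01) : ext f (Tmap f g s) = ext g (2*(s:ℝ) - Tmap f g s) := by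
  rcases eq_or_lt_of_le (Tmap_mem f g s).2.2 with h | hlt
  · exact h.symm
  exfalso
  -- T is strictly above the left endpoint
  have hTlb : max 0 (2*(s:ℝ)-1) < Tmap f g s := by
    rcases eq_or_lt_of_le (Tmap_lb f g s) with h | h
    · exfalso
      rcases max_cases 0 (2*(s:ℝ)-1) with ⟨he, hc⟩ | ⟨he, hc⟩ <;> rw [he] at h
      · rw [← h] at hlt
        have h0 : ext f 0 = 0 := ext_zero f
        have := (ext_mem g (2*(s:ℝ) - 0)).1
        rw [h0] at hlt; linarith
      · rw [← h] at hlt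
        have h1 : ext g (2*(s:ℝ) - (2*(s:ℝ)-1)) = 1 := by
          rw [show 2*(s:ℝ) - (2*(s:ℝ)-1) = 1 by ring]; exact ext_one g
        have := (ext_mem f (2*(s:ℝ)-1)).2
        rw [h1] at hlt; linarith
    · exact h
  -- openness argument
  have hopen : IsOpen {u : ℝ | ext g (2*(s:ℝ) - u) < ext f u} :=
    isOpen_lt ((ext_cont g).comp (continuous_const.sub continuous_id)) (ext_cont f)
  obtain ⟨δ, hδ, hball⟩ := Metric.isOpen_iff.1 hopen _ hlt
  set u := max (Tmap f g s - δ/2) (max 0 (2*(s:ℝ)-1)) with hu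
  have hult : u < Tmap f g s := by
    apply max_lt _ hTlb
    linarith
  have humem : u ∈ Metric.ball (Tmap f g s) δ := by
    rw [Metric.mem_ball, Real.dist_eq, abs_sub_lt_iff]
    constructor
    · linarith
    · have : Tmap f g s - δ/2 ≤ u := le_max_left _ _
      linarith
  have hA : u ∈ Aset f g s :=
    ⟨le_max_right _ _, le_trans hult.le (Tmap_ub f g s), (hball humem).le⟩
  exact absurd (Tmap_min f g hA) (not_le.2 hult)

lemma Tmap_mono : Monotone (Tmap f g) := by
  intro s s' hss
  have hss' : (s:ℝ) ≤ (s':ℝ) := hss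
  rcases le_or_gt (Tmap f g s') (min 1 (2*(s:ℝ))) with h | h
  · refine Tmap_min f g ⟨?_, h, ?_⟩
    · refine le_trans ?_ (Tmap_lb f g s')
      apply max_le_max (le_refl _); linarith
    · calc ext g (2*(s:ℝ) - Tmap f g s') ≤ ext g (2*(s':ℝ) - Tmap f g s') :=
          ext_mono g (by linarith)
        _ ≤ ext f (Tmap f g s') := (Tmap_mem f g s').2.2
  · exact le_trans (Tmap_ub f g s) h.le

lemma Tmap_lip {s s' : I01} (hss : (s:ℝ) ≤ (s':ℝ)) :
    Tmap f g s' ≤ Tmap f g s + 2*((s':ℝ) - (s:ℝ)) := by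
  set u := Tmap f g s + 2*((s':ℝ) - (s:ℝ)) with hu
  rcases le_or_gt u (min 1 (2*(s':ℝ))) with h | h
  · refine Tmap_min f g ⟨?_, h, ?_⟩
    · rw [hu]
      apply max_le
      · have := Tmap_nonneg f g s; linarith
      · have := Tmap_ge f g s; linarith
    · have : (2*(s':ℝ) - u) = 2*(s:ℝ) - Tmap f g s := by rw [hu]; ring
      rw [this]
      calc ext g (2*(s:ℝ) - Tmap f g s) = ext f (Tmap f g s) := (Tmap_eq f g s).symm
        _ ≤ ext f u := ext_mono f (by rw [hu]; linarith)
  · refine le_trans (Tmap_ub f g s') h.le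

lemma Tmap_zero : Tmap f g 0 = 0 := by
  have h1 := Tmap_lb f g 0
  have h2 := Tmap_ub f g 0
  rw [show ((0:I01):ℝ) = 0 from rfl] at h1 h2
  norm_num at h1 h2
  linarith

lemma Tmap_one : Tmap f g 1 = 1 := by
  have h1 := Tmap_lb f g 1
  have h2 := Tmap_ub f g 1
  rw [show ((1:I01):ℝ) = 1 from rfl] at h1 h2
  norm_num at h1 h2
  linarith

lemma Tmap_cont : Continuous (Tmap f g) := by
  have : LipschitzWith 2 (Tmap f g) := by
    apply LipschitzWith.of_dist_le_mul
    intro x y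
    rcases le_total (x:ℝ) (y:ℝ) with h | h
    · have h1 : Tmap f g x ≤ Tmap f g y := Tmap_mono f g (Subtype.coe_le_coe.1 h)
      have h2 := Tmap_lip f g h
      rw [Real.dist_eq, Subtype.dist_eq, Real.dist_eq, abs_sub_comm, abs_of_nonneg (by linarith),
        abs_sub_comm, abs_of_nonneg (by linarith)]
      push_cast
      linarith
    · have h1 : Tmap f g y ≤ Tmap f g x := Tmap_mono f g (Subtype.coe_le_coe.1 h)
      have h2 := Tmap_lip f g h
      rw [Real.dist_eq, Subtype.dist_eq, Real.dist_eq, abs_of_nonneg (by linarith),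
        abs_of_nonneg (by linarith)]
      push_cast
      linarith
  exact this.continuous

/-- First component of the common parametrization, as an element of `M`. -/
noncomputable def pMap : M :=
  mkM (fun s => ⟨Tmap f g s, ⟨Tmap_nonneg f g s, Tmap_le_one f g s⟩⟩)
    (Continuous.subtype_mk (Tmap_cont f g) _)
    (fun x y h => Subtype.mk_le_mk.2 (Tmap_mono f g h))
    (Subtype.ext (Tmap_zero f g)) (Subtype.ext (Tmap_one f g))

/-- Second component of the common parametrization, as an element of `M`. -/
noncomputable def qMap : M :=
  mkM (fun s => ⟨2*(s:ℝ) - Tmap f g s,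
      ⟨by have := Tmap_le_2s f g s; linarith, by have := Tmap_ge f g s; linarith⟩⟩)
    (Continuous.subtype_mk (by
      exact (continuous_const.mul continuous_subtype_val).sub (Tmap_cont f g)) _)
    (fun x y h => by
      have h' : (x:ℝ) ≤ (y:ℝ) := h
      have := Tmap_lip f g h'
      exact Subtype.mk_le_mk.2 (by linarith))
    (by apply Subtype.ext; show 2*((0:I01):ℝ) - Tmap f g 0 = ((0:I01):ℝ); rw [Tmap_zero f g]; norm_num)
    (by apply Subtype.ext; show 2*((1:I01):ℝ) - Tmap f g 1 = ((1:I01):ℝ); rw [Tmap_one f g]; norm_num)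

lemma pMap_coe (s : I01) : (((pMap f g).1 s : I01) : ℝ) = Tmap f g s := rfl
lemma qMap_coe (s : I01) : (((qMap f g).1 s : I01) : ℝ) = 2*(s:ℝ) - Tmap f g s := rfl

lemma pMap_ext (h : M) (s : I01) : (h.1 ((pMap f g).1 s) : ℝ) = ext h (Tmap f g s) := by
  rw [ext_apply h ⟨Tmap_nonneg f g s, Tmap_le_one f g s⟩]
  rfl

lemma qMap_ext (h : M) (s : I01) : (h.1 ((qMap f g).1 s) : ℝ) = ext h (2*(s:ℝ) - Tmap f g s) := by
  rw [ext_apply h ⟨by have := Tmap_le_2s f g s; linarith, by have := Tmap_ge f g s; linarith⟩]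
  rfl

lemma comp_pq_eq : compM f (pMap f g) = compM g (qMap f g) := by
  apply Subtype.ext
  apply ContinuousMap.ext
  intro s
  apply Subtype.ext
  show (f.1 ((pMap f g).1 s) : ℝ) = (g.1 ((qMap f g).1 s) : ℝ)
  rw [pMap_ext, qMap_ext]
  exact Tmap_eq f g s

end commonParam

----------------------------------------------------------------
-- The merging lemma
----------------------------------------------------------------

section merge
variable (ρ : M → M → ℝ)
    (hrefl : ∀ ξ : M, ρ ξ ξ = 0)
    (hsymm : ∀ ξ ζ : M, ρ ξ ζ = ρ ζ ξ)
    (htri : ∀ ξ ζ χ : M, ρ ξ χ ≤ ρ ξ ζ + ρ ζ χ)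
    (hcont : Continuous fun p : M × M => ρ p.1 p.2)
    (hinv : ∀ (ξ ζ : M) (g : unitInterval ≃ₜ unitInterval) (hg : Monotone ⇑g),
      ρ (Mcomp ξ g hg) (Mcomp ζ g hg) = ρ ξ ζ)

include hrefl hsymm htri hcont hinv in
lemma gap_merge {a b a' b' : ℝ} (h1 : IsGap ρ a b) (h2 : IsGap ρ a' b')
    (hle : a' ≤ b) (hlt : a < b') : IsGap ρ a b' := by
  obtain ⟨ha0, hab, hb1, ξ, ζ, hz1, hcond1⟩ := h1
  obtain ⟨ha0', hab', hb1', ξ', ζ', hz2, hcond2⟩ := h2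
  refine ⟨ha0, hlt, hb1', ?_⟩
  refine ⟨compM ξ (pMap ζ ξ'), compM ζ' (qMap ζ ξ'), ?_, ?_⟩
  · -- the distance is zero
    have e1 : ρ (compM ξ (pMap ζ ξ')) (compM ζ (pMap ζ ξ')) = 0 :=
      rho_comp_zero ρ hcont hinv hz1 _
    have e2 : ρ (compM ξ' (qMap ζ ξ')) (compM ζ' (qMap ζ ξ')) = 0 :=
      rho_comp_zero ρ hcont hinv hz2 _
    have e3 : compM ζ (pMap ζ ξ') = compM ξ' (qMap ζ ξ') := comp_pq_eq ζ ξ'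
    have tri := htri (compM ξ (pMap ζ ξ')) (compM ζ (pMap ζ ξ')) (compM ζ' (qMap ζ ξ'))
    rw [e1, e3, e2] at tri
    have := rho_nonneg ρ hrefl hsymm htri (compM ξ (pMap ζ ξ')) (compM ζ' (qMap ζ ξ'))
    linarith
  · -- the pointwise gap condition
    intro s
    by_cases hc : ((ξ.1 ((pMap ζ ξ').1 s)) : ℝ) ≤ a
    · exact Or.inl hc
    right
    push_neg at hc
    -- extension versions of the gap conditions
    have hcond1E : ∀ u : ℝ, ext ξ u ≤ a ∨ b ≤ ext ζ u := fun u =>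
      hcond1 (Set.projIcc 0 1 zero_le_one u)
    have hcond2E : ∀ u : ℝ, ext ξ' u ≤ a' ∨ b' ≤ ext ζ' u := fun u =>
      hcond2 (Set.projIcc 0 1 zero_le_one u)
    set T := Tmap ζ ξ' s with hT
    have hcE : a < ext ξ T := by rw [← pMap_ext ζ ξ' ξ s]; exact hc
    -- gap1 at the point `p s`
    have hH : b ≤ ext ζ T := by
      rcases hcond1E T with h | h
      · exact absurd h (not_le.2 hcE)
      · exact h
    have hkey : ext ζ T = ext ξ' (2*(s:ℝ) - T) := Tmap_eq ζ ξ' s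
    show b' ≤ (ζ'.1 ((qMap ζ ξ').1 s) : ℝ)
    rw [qMap_ext ζ ξ' ζ' s]
    rcases lt_or_ge a' (ext ξ' (2*(s:ℝ) - T)) with hgt | hle2
    · rcases hcond2E (2*(s:ℝ) - T) with h | h
      · exact absurd h (not_le.2 hgt)
      · exact h
    -- boundary case : ext ζ T = b = a'
    have heq1 : ext ζ T = b := le_antisymm (by rw [hkey]; linarith) hH
    have heq2 : a' = b := by rw [heq1] at hkey; linarith [hkey ▸ hle2]
    -- the minimal point of {ζ ≥ b}
    set Sb : Set ℝ := {u | u ∈ Icc (0:ℝ) 1 ∧ b ≤ ext ζ u} with hSb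
    have hSb_cl : IsClosed Sb := by
      have : Sb = Icc (0:ℝ) 1 ∩ {u | b ≤ ext ζ u} := by ext u; simp [hSb]
      rw [this]
      exact isClosed_Icc.inter (isClosed_le continuous_const (ext_cont ζ))
    have hSb_ne : (1:ℝ) ∈ Sb := ⟨⟨zero_le_one, le_refl _⟩, by rw [ext_one]; exact hb1⟩
    have hSb_bdd : BddBelow Sb := ⟨0, fun u hu => hu.1.1⟩
    set bb := sInf Sb with hbb
    have hbbmem : bb ∈ Sb := IsClosed.csInf_mem hSb_cl ⟨_, hSb_ne⟩ hSb_bdd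
    have hbb_pos : 0 < bb := by
      rcases eq_or_lt_of_le hbbmem.1.1 with h | h
      · exfalso
        have := hbbmem.2
        rw [← h, ext_zero] at this
        linarith
      · exact h
    have hlt_bb : ∀ u : ℝ, u < bb → ext ζ u < b := by
      intro u hu
      by_contra hcon
      push_neg at hcon
      rcases lt_or_ge u 0 with h0 | h0
      · rw [ext_of_nonpos ζ h0.le] at hcon; linarith
      · have : u ∈ Sb := ⟨⟨h0, le_trans hu.le hbbmem.1.2⟩, hcon⟩
        exact absurd (csInf_le hSb_bdd this) (not_le.2 hu)
    have hxib : ext ξ bb ≤ a := by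
      by_contra hcon
      push_neg at hcon
      have hopen : IsOpen {u : ℝ | a < ext ξ u} := isOpen_lt continuous_const (ext_cont ξ)
      obtain ⟨δ, hδ, hball⟩ := Metric.isOpen_iff.1 hopen _ hcon
      have hmem : bb - δ/2 ∈ Metric.ball bb δ := by
        rw [Metric.mem_ball, Real.dist_eq]
        rw [abs_of_nonpos (by linarith)]
        linarith
      have h1 := hball hmem
      have h2 : b ≤ ext ζ (bb - δ/2) := by
        rcases hcond1E (bb - δ/2) with h | h
        · exact absurd h (not_le.2 h1)
        · exact h
      have := hlt_bb (bb - δ/2) (by linarith)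
      linarith
    -- the maximal point of {ξ' ≤ a'}
    set Sa : Set ℝ := {u | u ∈ Icc (0:ℝ) 1 ∧ ext ξ' u ≤ a'} with hSa
    have hSa_cl : IsClosed Sa := by
      have : Sa = Icc (0:ℝ) 1 ∩ {u | ext ξ' u ≤ a'} := by ext u; simp [hSa]
      rw [this]
      exact isClosed_Icc.inter (isClosed_le (ext_cont ξ') continuous_const)
    have hSa_ne : (0:ℝ) ∈ Sa := ⟨⟨le_refl _, zero_le_one⟩, by rw [ext_zero]; exact ha0'⟩
    have hSa_bdd : BddAbove Sa := ⟨1, fun u hu => hu.1.2⟩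
    set aa := sSup Sa with haa
    have haamem : aa ∈ Sa := IsClosed.csSup_mem hSa_cl ⟨_, hSa_ne⟩ hSa_bdd
    have h_le_aa : ∀ u : ℝ, u ≤ aa → ext ξ' u ≤ a' := fun u hu =>
      le_trans (ext_mono ξ' hu) haamem.2
    -- the minimal point of {ζ' ≥ b'}
    set Sb' : Set ℝ := {u | u ∈ Icc (0:ℝ) 1 ∧ b' ≤ ext ζ' u} with hSb'
    have hSb'_cl : IsClosed Sb' := by
      have : Sb' = Icc (0:ℝ) 1 ∩ {u | b' ≤ ext ζ' u} := by ext u; simp [hSb']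
      rw [this]
      exact isClosed_Icc.inter (isClosed_le continuous_const (ext_cont ζ'))
    have hSb'_ne : (1:ℝ) ∈ Sb' := ⟨⟨zero_le_one, le_refl _⟩, by rw [ext_one]; exact hb1'⟩
    have hSb'_bdd : BddBelow Sb' := ⟨0, fun u hu => hu.1.1⟩
    set bb' := sInf Sb' with hbb'
    have hbb'mem : bb' ∈ Sb' := IsClosed.csInf_mem hSb'_cl ⟨_, hSb'_ne⟩ hSb'_bdd
    have h_ge_bb' : ∀ u : ℝ, bb' ≤ u → b' ≤ ext ζ' u := fun u hu =>
      le_trans hbb'mem.2 (ext_mono ζ' hu)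
    -- bb' ≤ aa
    have hbb'aa : bb' ≤ aa := by
      by_contra hcon
      push_neg at hcon
      set w := (aa + bb')/2 with hw
      have hw1 : aa < w := by rw [hw]; linarith
      have hw2 : w < bb' := by rw [hw]; linarith
      have hwmem : w ∈ Icc (0:ℝ) 1 := ⟨le_trans haamem.1.1 hw1.le, le_trans hw2.le hbb'mem.1.2⟩
      rcases hcond2E w with h | h
      · exact absurd (le_csSup hSa_bdd ⟨hwmem, h⟩) (not_le.2 hw1)
      · exact absurd (csInf_le hSb'_bdd ⟨hwmem, h⟩) (not_le.2 hw2)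
    -- suffices to show bb' ≤ 2s - T
    suffices hfin : bb' ≤ 2*(s:ℝ) - T by exact h_ge_bb' _ hfin
    by_contra hqlt
    push_neg at hqlt
    -- T ≥ bb, in fact T > bb
    have hTmem : T ∈ Icc (0:ℝ) 1 := ⟨Tmap_nonneg ζ ξ' s, Tmap_le_one ζ ξ' s⟩
    have hTbb : bb ≤ T := csInf_le hSb_bdd ⟨hTmem, by rw [heq1]⟩
    have hTbb' : bb < T := by
      rcases eq_or_lt_of_le hTbb with h | h
      · exfalso; rw [← h] at hcE; linarith
      · exact h
    -- contradiction with minimality at u = max bb (2s - aa)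
    set u := max bb (2*(s:ℝ) - aa) with hu
    have hu_lt : u < T := by
      apply max_lt hTbb'
      have : 2*(s:ℝ) - T < aa := lt_of_lt_of_le hqlt hbb'aa
      linarith
    have huA : u ∈ Aset ζ ξ' s := by
      refine ⟨?_, ?_, ?_⟩
      · apply max_le
        · exact le_trans hbb_pos.le (le_max_left _ _)
        · refine le_trans ?_ (le_max_right _ _)
          have := haamem.1.2; linarith
      · exact le_trans hu_lt.le (Tmap_ub ζ ξ' s)
      · have h1 : ext ξ' (2*(s:ℝ) - u) ≤ a' := by
          apply h_le_aa
          have : 2*(s:ℝ) - aa ≤ u := le_max_right _ _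
          linarith
        have h2 : b ≤ ext ζ u := le_trans hbbmem.2 (ext_mono ζ (le_max_left _ _))
        calc ext ξ' (2*(s:ℝ) - u) ≤ a' := h1
          _ = b := heq2
          _ ≤ ext ζ u := h2
    exact absurd (Tmap_min ζ ξ' huA) (not_le.2 hu_lt)

end merge

----------------------------------------------------------------
-- The limit lemma
----------------------------------------------------------------

section limit
variable (ρ : M → M → ℝ)
    (hcont : Continuous fun p : M × M => ρ p.1 p.2)
    (hinv : ∀ (ξ ζ : M) (g : unitInterval ≃ₜ unitInterval) (hg : Monotone ⇑g),
      ρ (Mcomp ξ g hg) (Mcomp ζ g hg) = ρ ξ ζ)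

include hcont hinv in
lemma gap_limit {an bn : ℕ → ℝ} {a b : ℝ}
    (h : ∀ n, IsGap ρ (an n) (bn n))
    (ha : Tendsto an atTop (𝓝 a)) (hb : Tendsto bn atTop (𝓝 b)) (hab : a < b) :
    IsGap ρ a b := by
  have ha0 : 0 ≤ a := le_of_tendsto_of_tendsto' tendsto_const_nhds ha (fun n => (h n).1)
  have hb1 : b ≤ 1 := le_of_tendsto_of_tendsto' hb tendsto_const_nhds (fun n => (h n).2.2.1)
  have hex : ∀ n, ∃ ξ ζ : M, ρ ξ ζ = 0 ∧
      ∀ s : I01, ((ξ.1 s : ℝ) ≤ an n ∨ bn n ≤ (ζ.1 s : ℝ)) := fun n => (h n).2.2.2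
  choose ξs ζs hz hcond using hex
  -- normalizing reparametrizations making the witnesses 3-Lipschitz
  have memI : ∀ (n : ℕ) (u : I01),
      ((u:ℝ) + ((ξs n).1 u : ℝ) + ((ζs n).1 u : ℝ))/3 ∈ Icc (0:ℝ) 1 := by
    intro n u
    have h1 := u.2.1; have h2 := u.2.2
    have h3 := ((ξs n).1 u).2.1; have h4 := ((ξs n).1 u).2.2
    have h5 := ((ζs n).1 u).2.1; have h6 := ((ζs n).1 u).2.2
    constructor
    · positivity
    · rw [div_le_one (by norm_num)]; linarith
  set qfun : ℕ → I01 → I01 := fun n u =>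
    ⟨((u:ℝ) + ((ξs n).1 u : ℝ) + ((ζs n).1 u : ℝ))/3, memI n u⟩ with hqfun
  have hqcoe : ∀ n (u : I01),
      ((qfun n u : I01) : ℝ) = ((u:ℝ) + ((ξs n).1 u : ℝ) + ((ζs n).1 u : ℝ))/3 :=
    fun n u => rfl
  have hqcont : ∀ n, Continuous (qfun n) := by
    intro n
    apply Continuous.subtype_mk
    exact (((continuous_subtype_val).add
      (continuous_subtype_val.comp (ξs n).1.continuous)).add
      (continuous_subtype_val.comp (ζs n).1.continuous)).div_const 3
  have hqstrict : ∀ n, StrictMono (qfun n) := by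
    intro n x y hxy
    have h1 : (x:ℝ) < (y:ℝ) := hxy
    have h2 : ((ξs n).1 x : ℝ) ≤ ((ξs n).1 y : ℝ) := Subtype.coe_le_coe.2 ((ξs n).2.1 hxy.le)
    have h3 : ((ζs n).1 x : ℝ) ≤ ((ζs n).1 y : ℝ) := Subtype.coe_le_coe.2 ((ζs n).2.1 hxy.le)
    rw [← Subtype.coe_lt_coe, hqcoe, hqcoe]
    linarith
  have hq0 : ∀ n, qfun n 0 = 0 := by
    intro n
    apply Subtype.ext
    rw [hqcoe, Mzero (ξs n), Mzero (ζs n)]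
    norm_num
  have hq1 : ∀ n, qfun n 1 = 1 := by
    intro n
    apply Subtype.ext
    rw [hqcoe, Mone (ξs n), Mone (ζs n)]
    show (((1:I01):ℝ) + ((1:I01):ℝ) + ((1:I01):ℝ))/3 = ((1:I01):ℝ)
    norm_num
  set Hn : ℕ → (I01 ≃ₜ I01) := fun n =>
    homeoOfStrict (qfun n) (hqcont n) (hqstrict n) (hq0 n) (hq1 n) with hHn
  have hHcoe : ∀ n (u : I01), Hn n u = qfun n u := fun n u => rfl
  have hHmono : ∀ n, Monotone ⇑(Hn n) := by
    intro n x y hxy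
    show Hn n x ≤ Hn n y
    rw [hHcoe, hHcoe]
    exact (hqstrict n).monotone hxy
  have hSmono : ∀ n, Monotone ⇑(Hn n).symm := fun n => symm_monotone (Hn n) (hHmono n)
  set Fn : ℕ → M := fun n => Mcomp (ξs n) (Hn n).symm (hSmono n) with hFn
  set Gn : ℕ → M := fun n => Mcomp (ζs n) (Hn n).symm (hSmono n) with hGn
  have hFcoe : ∀ n (s : I01), (Fn n).1 s = (ξs n).1 ((Hn n).symm s) := fun n s => rfl
  have hGcoe : ∀ n (s : I01), (Gn n).1 s = (ζs n).1 ((Hn n).symm s) := fun n s => rfl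
  have hzn : ∀ n, ρ (Fn n) (Gn n) = 0 := by
    intro n; rw [hFn, hGn]; simp only; rw [hinv, hz n]
  have hcondn : ∀ n (s : I01), ((Fn n).1 s : ℝ) ≤ an n ∨ bn n ≤ ((Gn n).1 s : ℝ) :=
    fun n s => hcond n ((Hn n).symm s)
  -- the 3-Lipschitz estimates
  have hqval : ∀ n (s : I01),
      (s:ℝ) = (((((Hn n).symm s) : I01):ℝ) + ((ξs n).1 ((Hn n).symm s) : ℝ)
        + ((ζs n).1 ((Hn n).symm s) : ℝ))/3 := by
    intro n s
    have h1 : Hn n ((Hn n).symm s) = s := (Hn n).apply_symm_apply s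
    have h2 := congrArg (Subtype.val) h1
    rw [hHcoe, hqcoe] at h2
    exact h2.symm
  have hlipmain : ∀ n (χ : M), (χ = ξs n ∨ χ = ζs n) → ∀ x y : I01, x ≤ y →
      (χ.1 ((Hn n).symm y) : ℝ) - (χ.1 ((Hn n).symm x) : ℝ) ≤ 3 * ((y:ℝ) - (x:ℝ)) := by
    intro n χ hχ x y hxy
    set u := (Hn n).symm x
    set v := (Hn n).symm y
    have huv : u ≤ v := hSmono n hxy
    have e1 : (u:ℝ) ≤ (v:ℝ) := huv
    have e2 : ((ξs n).1 u : ℝ) ≤ ((ξs n).1 v : ℝ) := Subtype.coe_le_coe.2 ((ξs n).2.1 huv)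
    have e3 : ((ζs n).1 u : ℝ) ≤ ((ζs n).1 v : ℝ) := Subtype.coe_le_coe.2 ((ζs n).2.1 huv)
    have hx := hqval n x
    have hy := hqval n y
    rcases hχ with rfl | rfl
    · rw [hx, hy]; linarith
    · rw [hx, hy]; linarith
  have hlipF : ∀ n (x y : I01), dist ((Fn n).1 x : ℝ) ((Fn n).1 y : ℝ) ≤ 3 * dist x y := by
    intro n x y
    rcases le_total x y with hxy | hxy
    · have h1 := hlipmain n (ξs n) (Or.inl rfl) x y hxy
      have h2 : ((Fn n).1 x : ℝ) ≤ ((Fn n).1 y : ℝ) :=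
        Subtype.coe_le_coe.2 ((Fn n).2.1 hxy)
      have h3 : (x:ℝ) ≤ (y:ℝ) := hxy
      rw [Real.dist_eq, Subtype.dist_eq, Real.dist_eq, abs_sub_comm, abs_of_nonneg (by linarith),
        abs_sub_comm, abs_of_nonneg (by linarith)]
      rw [hFcoe, hFcoe] at h2 ⊢
      linarith
    · have h1 := hlipmain n (ξs n) (Or.inl rfl) y x hxy
      have h2 : ((Fn n).1 y : ℝ) ≤ ((Fn n).1 x : ℝ) :=
        Subtype.coe_le_coe.2 ((Fn n).2.1 hxy)
      have h3 : (y:ℝ) ≤ (x:ℝ) := hxy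
      rw [Real.dist_eq, Subtype.dist_eq, Real.dist_eq, abs_of_nonneg (by
        rw [hFcoe, hFcoe] at h2; rw [hFcoe, hFcoe]; linarith), abs_of_nonneg (by linarith)]
      rw [hFcoe, hFcoe] at h2 ⊢
      linarith
  have hlipG : ∀ n (x y : I01), dist ((Gn n).1 x : ℝ) ((Gn n).1 y : ℝ) ≤ 3 * dist x y := by
    intro n x y
    rcases le_total x y with hxy | hxy
    · have h1 := hlipmain n (ζs n) (Or.inr rfl) x y hxy
      have h2 : ((Gn n).1 x : ℝ) ≤ ((Gn n).1 y : ℝ) :=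
        Subtype.coe_le_coe.2 ((Gn n).2.1 hxy)
      have h3 : (x:ℝ) ≤ (y:ℝ) := hxy
      rw [Real.dist_eq, Subtype.dist_eq, Real.dist_eq, abs_sub_comm, abs_of_nonneg (by linarith),
        abs_sub_comm, abs_of_nonneg (by linarith)]
      rw [hGcoe, hGcoe] at h2 ⊢
      linarith
    · have h1 := hlipmain n (ζs n) (Or.inr rfl) y x hxy
      have h2 : ((Gn n).1 y : ℝ) ≤ ((Gn n).1 x : ℝ) :=
        Subtype.coe_le_coe.2 ((Gn n).2.1 hxy)
      have h3 : (y:ℝ) ≤ (x:ℝ) := hxy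
      rw [Real.dist_eq, Subtype.dist_eq, Real.dist_eq, abs_of_nonneg (by
        rw [hGcoe, hGcoe] at h2; rw [hGcoe, hGcoe]; linarith), abs_of_nonneg (by linarith)]
      rw [hGcoe, hGcoe] at h2 ⊢
      linarith
  -- equicontinuity
  have hmod : Tendsto (fun r : ℝ => 3*r) (𝓝 0) (𝓝 0) :=
    (continuous_const.mul continuous_id).tendsto' 0 0 (by norm_num)
  have hedF : Equicontinuous (fun n => (fun s : I01 => ((Fn n).1 s : ℝ))) :=
    Metric.equicontinuous_of_continuity_modulus _ hmod _ (fun x y i => hlipF i x y)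
  have hedG : Equicontinuous (fun n => (fun s : I01 => ((Gn n).1 s : ℝ))) :=
    Metric.equicontinuous_of_continuity_modulus _ hmod _ (fun x y i => hlipG i x y)
  -- ultrafilter limits
  set L : Ultrafilter ℕ := Ultrafilter.of atTop with hLdef
  have hL : (L : Filter ℕ) ≤ atTop := Ultrafilter.of_le _
  have hpt : ∀ (W : ℕ → M) (s : I01), ∃ y ∈ Icc (0:ℝ) 1,
      Tendsto (fun n => ((W n).1 s : ℝ)) (L : Filter ℕ) (𝓝 y) := by
    intro W s
    have hle : (L.map (fun n => ((W n).1 s : ℝ)) : Filter ℝ) ≤ 𝓟 (Icc 0 1) := by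
      rw [le_principal_iff]
      exact mem_map.2 (univ_mem' fun n => ((W n).1 s).2)
    obtain ⟨y, hy, hy2⟩ := isCompact_Icc.ultrafilter_le_nhds (L.map _) hle
    exact ⟨y, hy, hy2⟩
  choose Finf hFmem hFlim using hpt Fn
  choose Ginf hGmem hGlim using hpt Gn
  -- properties of the limit functions
  have hFmono : ∀ x y : I01, x ≤ y → Finf x ≤ Finf y := fun x y hxy =>
    le_of_tendsto_of_tendsto' (hFlim x) (hFlim y)
      (fun n => Subtype.coe_le_coe.2 ((Fn n).2.1 hxy))
  have hGmono : ∀ x y : I01, x ≤ y → Ginf x ≤ Ginf y := fun x y hxy =>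
    le_of_tendsto_of_tendsto' (hGlim x) (hGlim y)
      (fun n => Subtype.coe_le_coe.2 ((Gn n).2.1 hxy))
  have hFlip : ∀ x y : I01, dist (Finf x) (Finf y) ≤ 3 * dist x y := fun x y =>
    le_of_tendsto ((hFlim x).dist (hFlim y)) (Eventually.of_forall fun n => hlipF n x y)
  have hGlip : ∀ x y : I01, dist (Ginf x) (Ginf y) ≤ 3 * dist x y := fun x y =>
    le_of_tendsto ((hGlim x).dist (hGlim y)) (Eventually.of_forall fun n => hlipG n x y)
  have hFcont : Continuous Finf := by
    refine LipschitzWith.continuous (K := 3) (LipschitzWith.of_dist_le_mul fun x y => ?_)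
    have := hFlip x y
    push_cast
    exact this
  have hGcont : Continuous Ginf := by
    refine LipschitzWith.continuous (K := 3) (LipschitzWith.of_dist_le_mul fun x y => ?_)
    have := hGlip x y
    push_cast
    exact this
  -- endpoints
  have hsymm0 : ∀ n, (Hn n).symm 0 = 0 := by
    intro n
    apply (Hn n).injective
    rw [Homeomorph.apply_symm_apply, hHcoe, hq0 n]
  have hsymm1 : ∀ n, (Hn n).symm 1 = 1 := by
    intro n
    apply (Hn n).injective
    rw [Homeomorph.apply_symm_apply, hHcoe, hq1 n]
  have hF0 : Finf 0 = 0 := by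
    have hcst : (fun n => ((Fn n).1 0 : ℝ)) = fun _ => (0:ℝ) := by
      funext n
      rw [hFcoe, hsymm0 n, Mzero (ξs n)]
      rfl
    have := hFlim 0
    rw [hcst] at this
    exact (tendsto_nhds_unique this tendsto_const_nhds)
  have hF1 : Finf 1 = 1 := by
    have hcst : (fun n => ((Fn n).1 1 : ℝ)) = fun _ => (1:ℝ) := by
      funext n
      rw [hFcoe, hsymm1 n, Mone (ξs n)]
      rfl
    have := hFlim 1
    rw [hcst] at this
    exact (tendsto_nhds_unique this tendsto_const_nhds)
  have hG0 : Ginf 0 = 0 := by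
    have hcst : (fun n => ((Gn n).1 0 : ℝ)) = fun _ => (0:ℝ) := by
      funext n
      rw [hGcoe, hsymm0 n, Mzero (ζs n)]
      rfl
    have := hGlim 0
    rw [hcst] at this
    exact (tendsto_nhds_unique this tendsto_const_nhds)
  have hG1 : Ginf 1 = 1 := by
    have hcst : (fun n => ((Gn n).1 1 : ℝ)) = fun _ => (1:ℝ) := by
      funext n
      rw [hGcoe, hsymm1 n, Mone (ζs n)]
      rfl
    have := hGlim 1
    rw [hcst] at this
    exact (tendsto_nhds_unique this tendsto_const_nhds)
  -- the limit elements of M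
  set ξinf : M := mkM (fun s => ⟨Finf s, hFmem s⟩) (hFcont.subtype_mk _)
    (fun x y hxy => Subtype.mk_le_mk.2 (hFmono x y hxy))
    (Subtype.ext hF0) (Subtype.ext hF1) with hξinf
  set ζinf : M := mkM (fun s => ⟨Ginf s, hGmem s⟩) (hGcont.subtype_mk _)
    (fun x y hxy => Subtype.mk_le_mk.2 (hGmono x y hxy))
    (Subtype.ext hG0) (Subtype.ext hG1) with hζinf
  -- uniform convergence
  have hFM : Tendsto Fn (L : Filter ℕ) (𝓝 ξinf) := by
    refine (tendsto_subtype_rng (p := fun f : C(I01, I01) => Monotone f ∧ Function.Surjective f)).2 ?_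
    rw [ContinuousMap.tendsto_iff_tendstoUniformly]
    have hFpi : Tendsto (fun n => (fun s : I01 => ((Fn n).1 s : ℝ))) (L : Filter ℕ)
        (𝓝 Finf) := tendsto_pi_nhds.2 hFlim
    have hFuf := (hedF.tendsto_uniformFun_iff_pi (L : Filter ℕ) Finf).2 hFpi
    have hFtu : TendstoUniformly (fun n => (fun s : I01 => ((Fn n).1 s : ℝ))) Finf
        (L : Filter ℕ) := UniformFun.tendsto_iff_tendstoUniformly.1 hFuf
    rw [Metric.tendstoUniformly_iff] at hFtu ⊢
    intro ε hε
    filter_upwards [hFtu ε hε] with n hn x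
    have := hn x
    rw [Subtype.dist_eq]
    exact this
  have hGM : Tendsto Gn (L : Filter ℕ) (𝓝 ζinf) := by
    refine (tendsto_subtype_rng (p := fun f : C(I01, I01) => Monotone f ∧ Function.Surjective f)).2 ?_
    rw [ContinuousMap.tendsto_iff_tendstoUniformly]
    have hGpi : Tendsto (fun n => (fun s : I01 => ((Gn n).1 s : ℝ))) (L : Filter ℕ)
        (𝓝 Ginf) := tendsto_pi_nhds.2 hGlim
    have hGuf := (hedG.tendsto_uniformFun_iff_pi (L : Filter ℕ) Ginf).2 hGpi
    have hGtu : TendstoUniformly (fun n => (fun s : I01 => ((Gn n).1 s : ℝ))) Ginf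
        (L : Filter ℕ) := UniformFun.tendsto_iff_tendstoUniformly.1 hGuf
    rw [Metric.tendstoUniformly_iff] at hGtu ⊢
    intro ε hε
    filter_upwards [hGtu ε hε] with n hn x
    have := hn x
    rw [Subtype.dist_eq]
    exact this
  -- the distance is zero at the limit
  have hρ : ρ ξinf ζinf = 0 := by
    have h1 := (hcont.tendsto (ξinf, ζinf)).comp (hFM.prodMk_nhds hGM)
    have h2 : ((fun p : M × M => ρ p.1 p.2) ∘ (fun n => (Fn n, Gn n))) = fun _ => 0 :=
      funext hzn
    rw [h2] at h1
    exact tendsto_nhds_unique h1 tendsto_const_nhds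
  refine ⟨ha0, hab, hb1, ξinf, ζinf, hρ, ?_⟩
  intro s
  rcases L.em (fun n => ((Fn n).1 s : ℝ) ≤ an n) with hev | hev
  · left
    show Finf s ≤ a
    exact le_of_tendsto_of_tendsto (hFlim s) (ha.mono_left hL) hev
  · right
    show b ≤ Ginf s
    have hev' : ∀ᶠ n in (L : Filter ℕ), bn n ≤ ((Gn n).1 s : ℝ) :=
      hev.mono (fun n hn => (hcondn n s).resolve_left hn)
    exact le_of_tendsto_of_tendsto (hb.mono_left hL) (hGlim s) hev'
end limit

end Stmt15

open Set Filter Topology Stmt15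

/-- For any continuous `Homeo⁺[0,1]`-invariant pseudometric `ρ` on `𝔐`, the
complement `K_ρ = (0,1) ∖ U_ρ` has no isolated points. -/
theorem stmt_15
    (ρ : M → M → ℝ)
    (hrefl : ∀ ξ : M, ρ ξ ξ = 0)
    (hsymm : ∀ ξ ζ : M, ρ ξ ζ = ρ ζ ξ)
    (htri : ∀ ξ ζ χ : M, ρ ξ χ ≤ ρ ξ ζ + ρ ζ χ)
    (hcont : Continuous fun p : M × M => ρ p.1 p.2)
    (hinv : ∀ (ξ ζ : M) (g : unitInterval ≃ₜ unitInterval) (hg : Monotone ⇑g),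
      ρ (Mcomp ξ g hg) (Mcomp ζ g hg) = ρ ξ ζ) :
    ∀ t ∈ Set.Ioo (0 : ℝ) 1 \ Urho ρ, ∀ ε > (0 : ℝ),
      ∃ s ∈ Set.Ioo (0 : ℝ) 1 \ Urho ρ, s ≠ t ∧ |s - t| < ε := by
  intro t ht ε hε
  obtain ⟨⟨ht0, ht1⟩, htU⟩ := ht
  by_contra hcon
  push_neg at hcon
  have hU : ∀ s : ℝ, 0 < s → s < 1 → s ≠ t → |s - t| < ε → s ∈ Urho ρ := by
    intro s h1 h2 h3 h4
    by_contra h5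
    exact absurd h4 (not_lt.2 (hcon s ⟨⟨h1, h2⟩, h5⟩ h3))
  set δ := min ε (min t (1-t)) / 2 with hδdef
  have hδ0 : 0 < δ := by
    have h1 : 0 < min t (1-t) := lt_min ht0 (by linarith)
    have h2 : 0 < min ε (min t (1-t)) := lt_min hε h1
    positivity
  have hδε : δ < ε := by
    have h1 : min ε (min t (1-t)) ≤ ε := min_le_left _ _
    rw [hδdef]; linarith
  have hδt : δ < t := by
    have h1 : min ε (min t (1-t)) ≤ t := le_trans (min_le_right _ _) (min_le_left _ _)
    rw [hδdef]; linarith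
  have hδ1 : t + δ < 1 := by
    have h1 : min ε (min t (1-t)) ≤ 1 - t := le_trans (min_le_right _ _) (min_le_right _ _)
    rw [hδdef]; linarith
  have hpunct : ∀ s : ℝ, t - δ ≤ s → s ≤ t + δ → s ≠ t → s ∈ Urho ρ := by
    intro s h1 h2 h3
    refine hU s (by linarith) (by linarith) h3 ?_
    rw [abs_sub_lt_iff]
    constructor <;> linarith
  -- the left gap
  obtain ⟨α₀, β₀, hg0, hs1mem⟩ :=
    hpunct (t - δ/2) (by linarith) (by linarith) (by linarith)
  have hα₀ : α₀ < t - δ/2 := hs1mem.1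
  have hβ₀gt : t - δ/2 < β₀ := hs1mem.2
  have hβ₀t : β₀ ≤ t := by
    by_contra hh
    push_neg at hh
    exact htU ⟨α₀, β₀, hg0, ⟨by linarith, hh⟩⟩
  -- the supremum of left-reachable gap endpoints
  set Tset := {β : ℝ | IsGap ρ α₀ β ∧ β ≤ t} with hTset
  have hTne : β₀ ∈ Tset := ⟨hg0, hβ₀t⟩
  have hTbdd : BddAbove Tset := ⟨t, fun x hx => hx.2⟩
  have hBle : sSup Tset ≤ t := csSup_le ⟨_, hTne⟩ (fun x hx => hx.2)
  have hBge : β₀ ≤ sSup Tset := le_csSup hTbdd hTne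
  have hBt : sSup Tset = t := by
    by_contra hne
    have hBlt : sSup Tset < t := lt_of_le_of_ne hBle hne
    obtain ⟨α₁, β₁, hg1, hBmem⟩ :=
      hpunct (sSup Tset) (by linarith) (by linarith) (by linarith)
    have hβ₁ : β₁ ≤ t := by
      by_contra hh
      push_neg at hh
      exact htU ⟨α₁, β₁, hg1, ⟨by linarith [hBmem.1], hh⟩⟩
    obtain ⟨β₂, hβ₂mem, hβ₂gt⟩ := exists_lt_of_lt_csSup ⟨_, hTne⟩ hBmem.1
    have hmerged : IsGap ρ α₀ β₁ :=
      gap_merge ρ hrefl hsymm htri hcont hinv hβ₂mem.1 hg1 hβ₂gt.le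
        (by linarith [hBmem.2, hβ₂mem.2])
    have hin : β₁ ∈ Tset := ⟨hmerged, hβ₁⟩
    exact absurd (le_csSup hTbdd hin) (not_le.2 hBmem.2)
  obtain ⟨u, _, hulim, humem⟩ := exists_seq_tendsto_sSup ⟨_, hTne⟩ hTbdd
  rw [hBt] at hulim
  have hgapL : IsGap ρ α₀ t :=
    gap_limit ρ hcont hinv (fun n => (humem n).1) tendsto_const_nhds hulim (by linarith)
  -- the right gap
  obtain ⟨α₂, β₂, hg2, hs2mem⟩ :=
    hpunct (t + δ/2) (by linarith) (by linarith) (by linarith)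
  have hα₂ : α₂ < t + δ/2 := hs2mem.1
  have hβ₂gt' : t + δ/2 < β₂ := hs2mem.2
  have hα₂t : t ≤ α₂ := by
    by_contra hh
    push_neg at hh
    exact htU ⟨α₂, β₂, hg2, ⟨hh, by linarith⟩⟩
  -- the infimum of right-reachable gap endpoints
  set Rset := {α : ℝ | IsGap ρ α β₂ ∧ t ≤ α} with hRset
  have hRne : α₂ ∈ Rset := ⟨hg2, hα₂t⟩
  have hRbdd : BddBelow Rset := ⟨t, fun x hx => hx.2⟩
  have hAge : t ≤ sInf Rset := le_csInf ⟨_, hRne⟩ (fun x hx => hx.2)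
  have hAle : sInf Rset ≤ α₂ := csInf_le hRbdd hRne
  have hAt : sInf Rset = t := by
    by_contra hne
    have hAgt : t < sInf Rset := lt_of_le_of_ne hAge (Ne.symm hne)
    obtain ⟨α₃, β₃, hg3, hAmem⟩ :=
      hpunct (sInf Rset) (by linarith) (by linarith) (by linarith)
    have hα₃ : t ≤ α₃ := by
      by_contra hh
      push_neg at hh
      exact htU ⟨α₃, β₃, hg3, ⟨hh, by linarith [hAmem.2]⟩⟩
    obtain ⟨α₄, hα₄mem, hα₄lt⟩ := exists_lt_of_csInf_lt ⟨_, hRne⟩ hAmem.2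
    have hmerged : IsGap ρ α₃ β₂ :=
      gap_merge ρ hrefl hsymm htri hcont hinv hg3 hα₄mem.1 hα₄lt.le
        (by linarith [hAmem.1, hα₄mem.2])
    have hin : α₃ ∈ Rset := ⟨hmerged, hα₃⟩
    exact absurd (csInf_le hRbdd hin) (not_le.2 hAmem.1)
  obtain ⟨v, _, hvlim, hvmem⟩ := exists_seq_tendsto_sInf ⟨_, hRne⟩ hRbdd
  rw [hAt] at hvlim
  have hgapR : IsGap ρ t β₂ :=
    gap_limit ρ hcont hinv (fun n => (hvmem n).1) hvlim tendsto_const_nhds (by linarith)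
  -- final merge
  have hfinal : IsGap ρ α₀ β₂ :=
    gap_merge ρ hrefl hsymm htri hcont hinv hgapL hgapR (le_refl t) (by linarith)
  exact htU ⟨α₀, β₂, hfinal, ⟨by linarith, by linarith⟩⟩
end

section
/- Let g ∈ Homeo⁺[0,1] with g ≠ id. Then there exists a continuous weakly increasing surjection ξ : [0,1] → [0,1] such that sup_{t∈[0,1]} |ξ(g⁻¹(t)) − ξ(t)| = 1. (Consequently, the bi-invariant uniform distance d_u(g, id) = sup_{ξ∈𝔐} d(ξ∘g⁻¹, ξ) on Homeo⁺[0,1] is discrete.) -/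
/-- For any `g ∈ Homeo⁺[0,1]` other than the identity there is a continuous weakly
increasing surjection `ξ` of `[0,1]` with `sup_t |ξ(g⁻¹(t)) − ξ(t)| = 1`; hence the
bi-invariant uniform distance on `Homeo⁺[0,1]` is discrete. -/
theorem stmt_17 (g : unitInterval ≃ₜ unitInterval) (h0 : g 0 = 0) (h1 : g 1 = 1)
    (hne : ⇑g ≠ id) :
    ∃ ξ : unitInterval → unitInterval,
      Continuous ξ ∧ Monotone ξ ∧ Function.Surjective ξ ∧
      (⨆ t : unitInterval, |(ξ (g.symm t) : ℝ) - (ξ t : ℝ)|) = 1 := by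
  have hx : ∃ x, g x ≠ x := by
    by_contra h
    push_neg at h
    exact hne (funext fun x => h x)
  obtain ⟨x, hx⟩ := hx
  set t : unitInterval := g x with ht
  have hs : g.symm t = x := g.symm_apply_apply x
  have hst : (x : ℝ) ≠ (t : ℝ) := by
    intro h
    exact hx (Subtype.ext h.symm)
  set a : ℝ := min (x : ℝ) (t : ℝ) with ha
  set b : ℝ := max (x : ℝ) (t : ℝ) with hb
  have hab : a < b := min_lt_max.mpr hst
  have ha0 : 0 ≤ a := le_min x.2.1 t.2.1
  have hb1 : b ≤ 1 := max_le x.2.2 t.2.2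
  have hba : (0 : ℝ) < b - a := sub_pos.mpr hab
  set f : ℝ → ℝ := fun u => min 1 (max 0 ((u - a) / (b - a))) with hf
  have hf01 : ∀ u, f u ∈ Set.Icc (0 : ℝ) 1 :=
    fun u => ⟨le_min zero_le_one (le_max_left _ _), min_le_left _ _⟩
  set ξ : unitInterval → unitInterval := fun u => ⟨f u, hf01 u⟩ with hξ
  have hmono : Monotone f := by
    intro u v huv
    simp only [hf]
    gcongr
  have hfa : f a = 0 := by simp [hf]
  have hfb : f b = 1 := by simp [hf, div_self hba.ne']
  have hfc : Continuous f := by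
    rw [hf]
    fun_prop
  have key : |(ξ (g.symm t) : ℝ) - (ξ t : ℝ)| = 1 := by
    rw [hs]
    show |f x - f t| = 1
    rcases hst.lt_or_gt with h | h
    · rw [show (x : ℝ) = a from (min_eq_left h.le).symm,
        show (t : ℝ) = b from (max_eq_right h.le).symm, hfa, hfb]
      norm_num
    · rw [show (t : ℝ) = a from (min_eq_right h.le).symm,
        show (x : ℝ) = b from (max_eq_left h.le).symm, hfa, hfb]
      norm_num
  have bound : ∀ u : unitInterval, |(ξ (g.symm u) : ℝ) - (ξ u : ℝ)| ≤ 1 := by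
    intro u
    have h1 := (ξ (g.symm u)).2
    have h2 := (ξ u).2
    rw [abs_sub_le_iff]
    constructor <;> [linarith [h1.2, h2.1]; linarith [h1.1, h2.2]]
  refine ⟨ξ, ?_, ?_, ?_, ?_⟩
  · exact Continuous.subtype_mk (hfc.comp continuous_subtype_val) _
  · intro u v huv
    exact Subtype.mk_le_mk.mpr (hmono huv)
  · intro y
    refine ⟨⟨a + y * (b - a), add_nonneg ha0 (mul_nonneg y.2.1 hba.le), ?_⟩, ?_⟩
    · nlinarith [y.2.2, hba.le]
    · apply Subtype.ext
      show f (a + y * (b - a)) = (y : ℝ)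
      have h1 : a + (y : ℝ) * (b - a) - a = (y : ℝ) * (b - a) := by ring
      simp only [hf]
      rw [h1, mul_div_cancel_right₀ _ hba.ne', max_eq_right y.2.1,
        min_eq_right y.2.2]
  · apply le_antisymm
    · exact ciSup_le bound
    · calc (1 : ℝ) = |(ξ (g.symm t) : ℝ) - (ξ t : ℝ)| := key.symm
        _ ≤ ⨆ u : unitInterval, |(ξ (g.symm u) : ℝ) - (ξ u : ℝ)| :=
          le_ciSup (f := fun u : unitInterval => |(ξ (g.symm u) : ℝ) - (ξ u : ℝ)|) ⟨1, by rintro y ⟨u, rfl⟩; exact bound u⟩ t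
end

section
/- Let μ be Lebesgue measure on [0,1] and let φ be a measure-class-preserving transformation of μ which is not equal to the identity almost everywhere. Then there exists f ∈ L¹(μ) with ‖f‖₁ = 1 such that ‖φ·₁f − f‖₁ > 1, where φ·₁f = (d(φ_*μ)/dμ) · (f ∘ φ⁻¹). (Consequently, the bi-invariant uniform distance on Aut*(μ), given by uniform convergence of the action on the unit ball of L¹(μ), is discrete.) -/
open MeasureTheory

/-- Lebesgue measure on the unit interval `[0,1]`. -/
noncomputable def μ01 : Measure unitInterval :=
  Measure.comap Subtype.val volume

lemma μ01_univ : μ01 Set.univ = 1 := by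
  rw [μ01, (MeasurableEmbedding.subtype_coe measurableSet_Icc).comap_apply,
    Subtype.coe_image_univ]
  show volume (Set.Icc (0:ℝ) 1) = 1
  simp [Real.volume_Icc]

instance : IsProbabilityMeasure μ01 := ⟨μ01_univ⟩

/-- There is a measurable set of positive measure moved off itself by `φ`. -/
lemma exists_moved_set (φ : unitInterval ≃ᵐ unitInterval)
    (hne : ¬ (⇑φ =ᵐ[μ01] id)) :
    ∃ A : Set unitInterval, MeasurableSet A ∧ 0 < μ01 A ∧ Disjoint A (φ '' A) := by
  classical
  set B := TopologicalSpace.countableBasis unitInterval with hB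
  set S : Set (Set unitInterval × Set unitInterval) :=
    {p | p.1 ∈ B ∧ p.2 ∈ B ∧ Disjoint p.1 p.2} with hS
  have hScount : S.Countable := by
    have := TopologicalSpace.countable_countableBasis unitInterval
    exact Set.Countable.mono (fun p hp => Set.mem_prod.mpr ⟨hp.1, hp.2.1⟩) (this.prod this)
  by_contra hcon
  push_neg at hcon
  apply hne
  have hnull : ∀ p ∈ S, μ01 (p.1 ∩ ⇑φ ⁻¹' p.2) = 0 := by
    intro p hp
    have hm : MeasurableSet (p.1 ∩ ⇑φ ⁻¹' p.2) :=
      ((TopologicalSpace.isOpen_of_mem_countableBasis hp.1).measurableSet).inter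
        (φ.measurable ((TopologicalSpace.isOpen_of_mem_countableBasis hp.2.1).measurableSet))
    by_contra h0
    have hpos : 0 < μ01 (p.1 ∩ ⇑φ ⁻¹' p.2) := pos_iff_ne_zero.mpr h0
    have hdisj : Disjoint (p.1 ∩ ⇑φ ⁻¹' p.2) (φ '' (p.1 ∩ ⇑φ ⁻¹' p.2)) := by
      apply Set.disjoint_of_subset Set.inter_subset_left _ hp.2.2
      rintro t ⟨x, hx, rfl⟩
      exact hx.2
    exact absurd hdisj (hcon _ hm hpos)
  have hsub : {x | φ x ≠ x} ⊆ ⋃ p ∈ S, (p.1 ∩ ⇑φ ⁻¹' p.2) := by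
    intro x hx
    obtain ⟨O1, O2, hO1, hO2, hxO1, hxO2, hdis⟩ := t2_separation (Ne.symm hx)
    obtain ⟨U, hU, hxU, hUO⟩ :=
      (TopologicalSpace.isBasis_countableBasis unitInterval).exists_subset_of_mem_open hxO1 hO1
    obtain ⟨V, hV, hxV, hVO⟩ :=
      (TopologicalSpace.isBasis_countableBasis unitInterval).exists_subset_of_mem_open hxO2 hO2
    refine Set.mem_biUnion (show (U, V) ∈ S from ⟨hU, hV, ?_⟩) ⟨hxU, hxV⟩
    exact Set.disjoint_of_subset hUO hVO hdis
  have : μ01 {x | φ x ≠ x} = 0 :=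
    measure_mono_null hsub ((measure_biUnion_null_iff hScount).2 hnull)
  filter_upwards [measure_eq_zero_iff_ae_notMem.mp this] with x hx
  simpa using hx

/-- If `φ ∈ Aut*(μ)` is a measure-class-preserving transformation of Lebesgue measure
on `[0,1]` which is not a.e. the identity, then some `f` in the unit sphere of `L¹(μ)`
is moved by more than `1` by the action `φ·₁f = (d(φ_*μ)/dμ)·(f ∘ φ⁻¹)`; hence the
bi-invariant uniform distance on `Aut*(μ)` is discrete. -/
theorem stmt_18 (φ : unitInterval ≃ᵐ unitInterval)
    (habs : Measure.map φ μ01 ≪ μ01) (habs' : μ01 ≪ Measure.map φ μ01)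
    (hne : ¬ (⇑φ =ᵐ[μ01] id)) :
    ∃ f : unitInterval → ℝ, Integrable f μ01 ∧ (∫ t, |f t| ∂μ01) = 1 ∧
      1 < ∫ t, |((Measure.map φ μ01).rnDeriv μ01 t).toReal * f (φ.symm t) - f t| ∂μ01 := by
  classical
  obtain ⟨A, hA, hApos, hAdisj⟩ := exists_moved_set φ hne
  set ν := Measure.map φ μ01 with hν
  set g : unitInterval → ℝ := fun t => (ν.rnDeriv μ01 t).toReal with hg
  set c : ℝ := (μ01 A).toReal with hc
  have hAfin : μ01 A ≠ ⊤ := measure_ne_top _ _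
  have hcpos : 0 < c := ENNReal.toReal_pos hApos.ne' hAfin
  set f : unitInterval → ℝ := fun t => c⁻¹ * A.indicator (fun _ => (1:ℝ)) t with hf
  have hfint : Integrable f μ01 :=
    (((integrable_const (1:ℝ)).indicator hA).const_mul _)
  have hgnn : ∀ t, 0 ≤ g t := fun t => ENNReal.toReal_nonneg
  -- image set
  have hImMeas : MeasurableSet (φ '' A) := by
    rw [φ.image_eq_preimage_symm]; exact φ.symm.measurable hA
  have hνIm : ν (φ '' A) = μ01 A := by
    rw [hν, Measure.map_apply φ.measurable hImMeas]
    congr 1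
    exact Set.preimage_image_eq A φ.injective
  -- integrability of second piece
  have hgint : Integrable ((φ '' A).indicator g) μ01 :=
    (Measure.integrable_toReal_rnDeriv (μ := ν) (ν := μ01)).indicator hImMeas
  -- pointwise identity
  have hpt : ∀ t, |g t * f (φ.symm t) - f t| =
      c⁻¹ * ((φ '' A).indicator g t + A.indicator (fun _ => (1:ℝ)) t) := by
    intro t
    by_cases ht : t ∈ φ '' A
    · have h1 : φ.symm t ∈ A := by
        rw [φ.image_eq_preimage_symm] at ht; exact ht
      have h2 : t ∉ A := fun h => Set.disjoint_left.mp hAdisj h ht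
      simp only [hf, Set.indicator_of_mem ht, Set.indicator_of_mem h1,
        Set.indicator_of_notMem h2]
      rw [abs_of_nonneg]
      · ring
      · have := hgnn t
        nlinarith [inv_nonneg.mpr hcpos.le]
    · have h1 : φ.symm t ∉ A := by
        rw [φ.image_eq_preimage_symm] at ht; exact ht
      by_cases h2 : t ∈ A
      · simp only [hf, Set.indicator_of_notMem ht, Set.indicator_of_mem h2,
          Set.indicator_of_notMem h1]
        rw [abs_of_nonpos (by simp; positivity)]
        ring
      · simp [hf, Set.indicator_of_notMem ht, Set.indicator_of_notMem h1,
          Set.indicator_of_notMem h2]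
  refine ⟨f, hfint, ?_, ?_⟩
  · have : ∀ t, |f t| = f t := by
      intro t
      apply abs_of_nonneg
      by_cases h : t ∈ A <;>
        simp [hf, Set.indicator_of_mem, Set.indicator_of_notMem, h, inv_nonneg, hcpos.le]
    simp_rw [this]
    rw [hf, integral_const_mul, integral_indicator_const _ hA]
    simp [hc]
    rw [measureReal_def, ← hc, inv_mul_cancel₀ hcpos.ne']
  · have hrw : (∫ t, |g t * f (φ.symm t) - f t| ∂μ01)
        = c⁻¹ * ((∫ t, (φ '' A).indicator g t ∂μ01) + ∫ t, A.indicator (fun _ => (1:ℝ)) t ∂μ01) := by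
      simp_rw [hpt]
      rw [integral_const_mul, integral_add hgint ((integrable_const (1:ℝ)).indicator hA)]
    rw [hrw]
    have h1 : ∫ t, (φ '' A).indicator g t ∂μ01 = c := by
      rw [integral_indicator hImMeas, hg,
        Measure.setIntegral_toReal_rnDeriv habs (φ '' A), measureReal_def, hνIm, hc]
    have h2 : ∫ t, A.indicator (fun _ => (1:ℝ)) t ∂μ01 = c := by
      rw [integral_indicator_const _ hA]; simp [hc, measureReal_def]
    rw [h1, h2]
    have h3 : c⁻¹ * (c + c) = 2 := by field_simp; ring
    rw [h3]; norm_num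
end

section
/- Let E be a separable real Banach space and let g : E → E be a surjective linear isometry with g ≠ id. Then there exist x ∈ E and a continuous linear functional λ ∈ E* with ‖x‖ = ‖λ‖ = 1 and λ(x) = 1 (λ norms x), but λ(g x) < 1 (λ does not norm g x). -/
/-- If `g` is a surjective linear isometry of a separable real Banach space, other than
the identity, then some norm-one functional `λ` norms some unit vector `x` (`λ x = 1`)
but does not norm `g x` (`λ (g x) < 1`). -/
theorem stmt_19 (E : Type*) [NormedAddCommGroup E] [NormedSpace ℝ E] [CompleteSpace E]
    [TopologicalSpace.SeparableSpace E]
    (g : E ≃ₗᵢ[ℝ] E) (hg : ⇑g ≠ id) :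
    ∃ (x : E) (l : E →L[ℝ] ℝ), ‖x‖ = 1 ∧ ‖l‖ = 1 ∧ l x = 1 ∧ l (g x) < 1 := by
  by_contra hc
  push_neg at hc
  -- hc : ∀ x l, ‖x‖ = 1 → ‖l‖ = 1 → l x = 1 → 1 ≤ l (g x)
  obtain ⟨u, hu⟩ : ∃ u, g u ≠ u := by
    by_contra h
    push_neg at h
    exact hg (funext h)
  have hδ : (0:ℝ) < ‖u - g u‖ := by
    rw [norm_pos_iff, sub_ne_zero]
    exact fun h => hu h.symm
  set δ : ℝ := ‖u - g u‖ with hδdef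
  set u' : E := δ⁻¹ • u with hu'
  set x₀ : E := u' - g u' with hx₀
  have hx₀eq : x₀ = δ⁻¹ • (u - g u) := by
    simp [hx₀, hu', smul_sub, map_smul]
  have hx₀norm : ‖x₀‖ = 1 := by
    rw [hx₀eq, norm_smul, norm_inv, Real.norm_eq_abs, abs_of_pos hδ]
    field_simp
    exact hδdef.symm
  obtain ⟨l, hl1, hlx₀⟩ := exists_dual_vector ℝ x₀ (by
    intro h
    rw [h] at hx₀norm
    exact zero_ne_one hx₀norm)
  rw [hx₀norm] at hlx₀
  -- iterates of g preserve norms and subtraction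
  have hiter_norm : ∀ (n : ℕ) (y : E), ‖(⇑g)^[n] y‖ = ‖y‖ := by
    intro n
    induction n with
    | zero => intro y; simp
    | succ n ih =>
      intro y
      rw [Function.iterate_succ_apply', g.norm_map, ih]
  have hiter_sub : ∀ (n : ℕ) (a b : E), (⇑g)^[n] (a - b) = (⇑g)^[n] a - (⇑g)^[n] b := by
    intro n
    induction n with
    | zero => intro a b; simp
    | succ n ih =>
      intro a b
      simp only [Function.iterate_succ_apply', ih, map_sub]
  -- l norms every iterate of x₀
  have key : ∀ n : ℕ, l ((⇑g)^[n] x₀) = 1 := by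
    intro n
    induction n with
    | zero => simpa using hlx₀
    | succ n ih =>
      have hnorm : ‖(⇑g)^[n] x₀‖ = 1 := by rw [hiter_norm, hx₀norm]
      have hge : 1 ≤ l (g ((⇑g)^[n] x₀)) := hc _ l hnorm hl1 ih
      have hle : l (g ((⇑g)^[n] x₀)) ≤ 1 := by
        calc l (g ((⇑g)^[n] x₀)) ≤ ‖l‖ * ‖g ((⇑g)^[n] x₀)‖ :=
              le_trans (le_abs_self _) (l.le_opNorm _)
          _ = 1 := by rw [hl1, g.norm_map, hnorm]; ring
      rw [Function.iterate_succ_apply']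
      linarith
  -- telescoping sum
  have tele : ∀ n : ℕ, (∑ k ∈ Finset.range n, (⇑g)^[k] x₀) = u' - (⇑g)^[n] u' := by
    intro n
    induction n with
    | zero => simp
    | succ n ih =>
      rw [Finset.sum_range_succ, ih, hx₀, hiter_sub]
      have : (⇑g)^[n] (g u') = (⇑g)^[n+1] u' := (Function.iterate_succ_apply (⇑g) n u').symm
      rw [this]
      abel
  obtain ⟨n, hn⟩ := exists_nat_gt (2 * ‖u'‖)
  have hsum : l (u' - (⇑g)^[n] u') = n := by
    rw [← tele, map_sum]
    simp [key]
  have hbound : l (u' - (⇑g)^[n] u') ≤ 2 * ‖u'‖ := by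
    calc l (u' - (⇑g)^[n] u') ≤ ‖l‖ * ‖u' - (⇑g)^[n] u'‖ :=
          le_trans (le_abs_self _) (l.le_opNorm _)
      _ ≤ 1 * (‖u'‖ + ‖(⇑g)^[n] u'‖) := by
          rw [hl1]
          exact mul_le_mul_of_nonneg_left (norm_sub_le _ _) zero_le_one
      _ = 2 * ‖u'‖ := by rw [hiter_norm]; ring
  rw [hsum] at hbound
  linarith
end
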